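/- Let V = (v₁,v₂) with v₁, v₂ > 0. If the sequence of maps ω ↦ N(Pₙ(ω)V) converges uniformly on S^ℕ, then one of the following five cases holds. Case 1: every [[a,b],[0,d]] ∈ M has a ≥ d, every [[a,0],[c,d]] ∈ M has a ≤ d, whenever [[a,b],[c,0]] ∈ M and [[0,b'],[c',d']] ∈ M one has bc' ≥ b'c, and no matrix in M has the form [[a,0],[0,d]] or [[0,b],[c,0]]. Case 2: every [[a,b],[0,d]] ∈ M has a < d, every [[a,0],[c,d]] ∈ M has a > d, and whenever [[a,b],[c,0]] ∈ M and [[0,b'],[c',d']] ∈ M one has bc' < b'c. Case 3: every [[a,b],[0,d]] ∈ M has a ≥ d, every [[a,0],[c,d]] ∈ M has a > d, and no matrix in M has top-left entry 0. Case 4: every [[a,b],[0,d]] ∈ M has a < d, every [[a,0],[c,d]] ∈ M has a ≤ d, and no matrix in M has bottom-right entry 0. Case 5: V is an eigenvector of every matrix in M. -/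

import Mathlib

open Matrix Filter

/-- A 2×2 real matrix is nonnegative and column-allowable. -/
def ColAllowable (A : Matrix (Fin 2) (Fin 2) ℝ) : Prop :=
  (∀ i j, 0 ≤ A i j) ∧ 0 < A 0 0 + A 1 0 ∧ 0 < A 0 1 + A 1 1

/-- `n(X) = x₁/(x₁+x₂)`. -/
noncomputable def nv (X : Fin 2 → ℝ) : ℝ := X 0 / (X 0 + X 1)

/-- The normalized vector `N(X)`. -/
noncomputable def Nv (X : Fin 2 → ℝ) : Fin 2 → ℝ := ![nv X, 1 - nv X]

/-- `Pₙ(ω) = M_{ω₁} M_{ω₂} ⋯ M_{ωₙ}`. -/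
def Pprod {s : ℕ} (M : Fin s → Matrix (Fin 2) (Fin 2) ℝ) (ω : ℕ → Fin s) (n : ℕ) :
    Matrix (Fin 2) (Fin 2) ℝ :=
  ((List.range n).map (fun i => M (ω i))).prod

namespace Stmt13

abbrev Mat := Matrix (Fin 2) (Fin 2) ℝ

noncomputable def den (A : Mat) (t : ℝ) : ℝ :=
  (A 0 0 + A 1 0) * t + (A 0 1 + A 1 1) * (1 - t)

noncomputable def phi (A : Mat) (t : ℝ) : ℝ :=
  (A 0 0 * t + A 0 1 * (1 - t)) / den A t

lemma pos_combo {p q x y : ℝ} (hp : 0 < p) (hq : 0 < q) (hx : 0 ≤ x) (hy : 0 ≤ y)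
    (hxy : 0 < x + y) : 0 < p * x + q * y := by
  rcases lt_or_eq_of_le hx with hx' | hx'
  · nlinarith
  · have hy' : 0 < y := by linarith
    nlinarith

lemma den_pos {A : Mat} (hA : ColAllowable A) {t : ℝ} (ht : t ∈ Set.Icc (0:ℝ) 1) :
    0 < den A t := by
  exact pos_combo hA.2.1 hA.2.2 ht.1 (by linarith [ht.2]) (by norm_num)

lemma CA_one : ColAllowable (1 : Mat) := by
  refine ⟨fun i j => ?_, by norm_num, by norm_num⟩
  by_cases h : i = j <;> simp [Matrix.one_apply, h]

lemma CA_mul {A B : Mat} (hA : ColAllowable A) (hB : ColAllowable B) :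
    ColAllowable (A * B) := by
  have hmul : ∀ i j, (A * B) i j = A i 0 * B 0 j + A i 1 * B 1 j := by
    intro i j; simp [Matrix.mul_apply, Fin.sum_univ_two]
  refine ⟨fun i j => ?_, ?_, ?_⟩
  · rw [hmul]
    have := hA.1 i 0; have := hA.1 i 1; have := hB.1 0 j; have := hB.1 1 j
    positivity
  · rw [hmul, hmul]
    have h : A 0 0 * B 0 0 + A 0 1 * B 1 0 + (A 1 0 * B 0 0 + A 1 1 * B 1 0)
        = (A 0 0 + A 1 0) * B 0 0 + (A 0 1 + A 1 1) * B 1 0 := by ring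
    rw [h]
    exact pos_combo hA.2.1 hA.2.2 (hB.1 0 0) (hB.1 1 0) hB.2.1
  · rw [hmul, hmul]
    have h : A 0 0 * B 0 1 + A 0 1 * B 1 1 + (A 1 0 * B 0 1 + A 1 1 * B 1 1)
        = (A 0 0 + A 1 0) * B 0 1 + (A 0 1 + A 1 1) * B 1 1 := by ring
    rw [h]
    exact pos_combo hA.2.1 hA.2.2 (hB.1 0 1) (hB.1 1 1) hB.2.2

lemma CA_pow {A : Mat} (hA : ColAllowable A) (n : ℕ) : ColAllowable (A ^ n) := by
  induction n with
  | zero => simpa using CA_one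
  | succ n ih => rw [pow_succ]; exact CA_mul ih hA

variable {s : ℕ}

def Pw (M : Fin s → Mat) (u : List (Fin s)) : Mat := (u.map M).prod

lemma CA_Pw {M : Fin s → Mat} (hM : ∀ k, ColAllowable (M k)) (u : List (Fin s)) :
    ColAllowable (Pw M u) := by
  induction u with
  | nil => simpa [Pw] using CA_one
  | cons a u ih => rw [Pw, List.map_cons, List.prod_cons]; exact CA_mul (hM a) ih

lemma Pw_append {M : Fin s → Mat} (u w : List (Fin s)) :
    Pw M (u ++ w) = Pw M u * Pw M w := by
  simp [Pw]

lemma Pw_single {M : Fin s → Mat} (k : Fin s) : Pw M [k] = M k := by simp [Pw]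

lemma Pw_pair {M : Fin s → Mat} (k l : Fin s) : Pw M [k, l] = M k * M l := by simp [Pw]

lemma Pw_join_replicate {M : Fin s → Mat} (n : ℕ) (v : List (Fin s)) :
    Pw M (List.flatten (List.replicate n v)) = (Pw M v) ^ n := by
  induction n with
  | zero => simp [Pw]
  | succ n ih => rw [List.replicate_succ, List.flatten_cons, Pw_append, ih, pow_succ']

lemma length_join_replicate (n : ℕ) (v : List (Fin s)) :
    (List.flatten (List.replicate n v)).length = n * v.length := by
  induction n with
  | zero => simp
  | succ n ih => rw [List.replicate_succ, List.flatten_cons, List.length_append, ih]; ring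


lemma mulVec_apply0 (A : Mat) (X : Fin 2 → ℝ) :
    (A.mulVec X) 0 = A 0 0 * X 0 + A 0 1 * X 1 := by
  simp [Matrix.mulVec, dotProduct, Fin.sum_univ_two]

lemma mulVec_apply1 (A : Mat) (X : Fin 2 → ℝ) :
    (A.mulVec X) 1 = A 1 0 * X 0 + A 1 1 * X 1 := by
  simp [Matrix.mulVec, dotProduct, Fin.sum_univ_two]

/-- conditions on a nonnegative vector -/
def NVec (X : Fin 2 → ℝ) : Prop := 0 ≤ X 0 ∧ 0 ≤ X 1 ∧ 0 < X 0 + X 1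

lemma NVec_mulVec {A : Mat} (hA : ColAllowable A) {X : Fin 2 → ℝ} (hX : NVec X) :
    NVec (A.mulVec X) := by
  obtain ⟨h0, h1, hS⟩ := hX
  refine ⟨?_, ?_, ?_⟩
  · rw [mulVec_apply0]; have := hA.1 0 0; have := hA.1 0 1; positivity
  · rw [mulVec_apply1]; have := hA.1 1 0; have := hA.1 1 1; positivity
  · rw [mulVec_apply0, mulVec_apply1]
    have h : A 0 0 * X 0 + A 0 1 * X 1 + (A 1 0 * X 0 + A 1 1 * X 1)
        = (A 0 0 + A 1 0) * X 0 + (A 0 1 + A 1 1) * X 1 := by ring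
    rw [h]; exact pos_combo hA.2.1 hA.2.2 h0 h1 hS

lemma nv_mem {X : Fin 2 → ℝ} (hX : NVec X) : nv X ∈ Set.Icc (0:ℝ) 1 := by
  obtain ⟨h0, h1, hS⟩ := hX
  constructor
  · exact div_nonneg h0 hS.le
  · rw [nv, div_le_one hS]; linarith

lemma nv_eq_phi {A : Mat} (hA : ColAllowable A) {X : Fin 2 → ℝ} (hX : NVec X) :
    nv (A.mulVec X) = phi A (nv X) := by
  obtain ⟨h0, h1, hS⟩ := hX
  have hS' : X 0 + X 1 ≠ 0 := ne_of_gt hS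
  have hD : 0 < (A 0 0 + A 1 0) * X 0 + (A 0 1 + A 1 1) * X 1 :=
    pos_combo hA.2.1 hA.2.2 h0 h1 hS
  have hD' : (A 0 0 + A 1 0) * X 0 + (A 0 1 + A 1 1) * X 1 ≠ 0 := ne_of_gt hD
  have h1t : (1:ℝ) - X 0 / (X 0 + X 1) = X 1 / (X 0 + X 1) := by
    field_simp
    ring
  simp only [nv, phi, den, mulVec_apply0, mulVec_apply1]
  rw [h1t]
  rw [show A 0 0 * (X 0 / (X 0 + X 1)) + A 0 1 * (X 1 / (X 0 + X 1))
      = (A 0 0 * X 0 + A 0 1 * X 1) / (X 0 + X 1) from by ring]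
  rw [show (A 0 0 + A 1 0) * (X 0 / (X 0 + X 1)) + (A 0 1 + A 1 1) * (X 1 / (X 0 + X 1))
      = ((A 0 0 + A 1 0) * X 0 + (A 0 1 + A 1 1) * X 1) / (X 0 + X 1) from by ring]
  have hgen : ∀ a b c : ℝ, c ≠ 0 → b ≠ 0 → a / c / (b / c) = a / b := by
    intro a b c hc hb; field_simp
  rw [hgen _ _ _ hS' hD']
  rw [show A 0 0 * X 0 + A 0 1 * X 1 + (A 1 0 * X 0 + A 1 1 * X 1)
      = (A 0 0 + A 1 0) * X 0 + (A 0 1 + A 1 1) * X 1 from by ring]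

lemma vec_t_NVec {t : ℝ} (ht : t ∈ Set.Icc (0:ℝ) 1) : NVec ![t, 1 - t] := by
  refine ⟨by simpa using ht.1, by simp; linarith [ht.2], by simp⟩

lemma nv_vec_t {t : ℝ} : nv ![t, 1 - t] = t := by simp [nv]

lemma phi_eq_nv {A : Mat} (hA : ColAllowable A) {t : ℝ} (ht : t ∈ Set.Icc (0:ℝ) 1) :
    phi A t = nv (A.mulVec ![t, 1 - t]) := by
  rw [nv_eq_phi hA (vec_t_NVec ht), nv_vec_t]

lemma phi_mem {A : Mat} (hA : ColAllowable A) {t : ℝ} (ht : t ∈ Set.Icc (0:ℝ) 1) :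
    phi A t ∈ Set.Icc (0:ℝ) 1 := by
  rw [phi_eq_nv hA ht]
  exact nv_mem (NVec_mulVec hA (vec_t_NVec ht))

lemma phi_comp {A B : Mat} (hA : ColAllowable A) (hB : ColAllowable B) {t : ℝ}
    (ht : t ∈ Set.Icc (0:ℝ) 1) : phi (A * B) t = phi A (phi B t) := by
  rw [phi_eq_nv (CA_mul hA hB) ht, ← Matrix.mulVec_mulVec,
    nv_eq_phi hA (NVec_mulVec hB (vec_t_NVec ht)), nv_eq_phi hB (vec_t_NVec ht), nv_vec_t]

lemma phi_pow_succ {A : Mat} (hA : ColAllowable A) (n : ℕ) {t : ℝ}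
    (ht : t ∈ Set.Icc (0:ℝ) 1) : phi (A ^ (n + 1)) t = phi A (phi (A ^ n) t) := by
  rw [pow_succ', phi_comp hA (CA_pow hA n) ht]

lemma phi_one_mat {t : ℝ} : phi (1 : Mat) t = t := by
  have h0 : ((1 : Mat) 0 0) = 1 := by simp [Matrix.one_apply]
  have h1 : ((1 : Mat) 0 1) = 0 := by simp [Matrix.one_apply]
  have h2 : ((1 : Mat) 1 0) = 0 := by simp [Matrix.one_apply]
  have h3 : ((1 : Mat) 1 1) = 1 := by simp [Matrix.one_apply]
  rw [phi, den, h0, h1, h2, h3]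
  have : (1 + 0) * t + (0 + 1) * (1 - t) = 1 := by ring
  rw [this]
  ring_nf

lemma phi_smul_one {c t : ℝ} (hc : 0 < c) : phi (c • (1 : Mat)) t = t := by
  have h0 : ((c • (1 : Mat)) 0 0) = c := by simp [Matrix.one_apply]
  have h1 : ((c • (1 : Mat)) 0 1) = 0 := by simp [Matrix.one_apply]
  have h2 : ((c • (1 : Mat)) 1 0) = 0 := by simp [Matrix.one_apply]
  have h3 : ((c • (1 : Mat)) 1 1) = c := by simp [Matrix.one_apply]
  rw [phi, den, h0, h1, h2, h3]
  have : (c + 0) * t + (0 + c) * (1 - t) = c := by ring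
  rw [this]
  field_simp
  ring

lemma phi_diff {A : Mat} (hA : ColAllowable A) {t1 t2 : ℝ}
    (ht1 : t1 ∈ Set.Icc (0:ℝ) 1) (ht2 : t2 ∈ Set.Icc (0:ℝ) 1) :
    phi A t2 - phi A t1 =
      (A 0 0 * A 1 1 - A 0 1 * A 1 0) * (t2 - t1) / (den A t1 * den A t2) := by
  have hd1 : den A t1 ≠ 0 := ne_of_gt (den_pos hA ht1)
  have hd2 : den A t2 ≠ 0 := ne_of_gt (den_pos hA ht2)
  have e2 : phi A t2 * (den A t1 * den A t2)
      = (A 0 0 * t2 + A 0 1 * (1 - t2)) * den A t1 := by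
    rw [phi]; field_simp
  have e1 : phi A t1 * (den A t1 * den A t2)
      = (A 0 0 * t1 + A 0 1 * (1 - t1)) * den A t2 := by
    rw [phi]; field_simp
  rw [eq_div_iff (mul_ne_zero hd1 hd2), sub_mul, e1, e2, den, den]
  ring

lemma phi_le_phi {A : Mat} (hA : ColAllowable A)
    (hdet : 0 ≤ A 0 0 * A 1 1 - A 0 1 * A 1 0) {t1 t2 : ℝ}
    (ht1 : t1 ∈ Set.Icc (0:ℝ) 1) (ht2 : t2 ∈ Set.Icc (0:ℝ) 1) (h12 : t1 ≤ t2) :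
    phi A t1 ≤ phi A t2 := by
  have h := phi_diff hA ht1 ht2
  have hd1 := den_pos hA ht1
  have hd2 := den_pos hA ht2
  have : 0 ≤ phi A t2 - phi A t1 := by
    rw [h]; apply div_nonneg; · nlinarith
    · positivity
  linarith

lemma phi_sub_self {A : Mat} (hA : ColAllowable A) (h10 : A 1 0 = 0) {t : ℝ}
    (ht : t ∈ Set.Icc (0:ℝ) 1) :
    phi A t - t = (1 - t) * (A 0 1 * (1 - t) + (A 0 0 - A 1 1) * t) / den A t := by
  have hd : den A t ≠ 0 := ne_of_gt (den_pos hA ht)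
  rw [eq_div_iff hd, sub_mul, phi, div_mul_cancel₀ _ hd, den, h10]
  ring

lemma phi_fix_one {A : Mat} (hA : ColAllowable A) (h10 : A 1 0 = 0) : phi A 1 = 1 := by
  have hA00 : 0 < A 0 0 := by have := hA.2.1; rw [h10] at this; linarith
  rw [phi, den, h10]
  have h1 : A 0 0 * 1 + A 0 1 * (1 - 1) = A 0 0 := by ring
  have h2 : (A 0 0 + 0) * 1 + (A 0 1 + A 1 1) * (1 - 1) = A 0 0 := by ring
  rw [h1, h2, div_self (ne_of_gt hA00)]

lemma phi_fix_zero {A : Mat} (hA : ColAllowable A) (h01 : A 0 1 = 0) : phi A 0 = 0 := by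
  rw [phi, den, h01]
  have h1 : A 0 0 * 0 + 0 * (1 - 0) = 0 := by ring
  rw [h1, zero_div]

lemma phi_one_to_zero {A : Mat} (h00 : A 0 0 = 0) : phi A 1 = 0 := by
  rw [phi, h00]
  have h1 : (0:ℝ) * 1 + A 0 1 * (1 - 1) = 0 := by ring
  rw [h1, zero_div]

lemma phi_zero_to_one {A : Mat} (hA : ColAllowable A) (h11 : A 1 1 = 0) : phi A 0 = 1 := by
  have hA01 : 0 < A 0 1 := by have := hA.2.2; rw [h11] at this; linarith
  rw [phi, den, h11]
  have h1 : A 0 0 * 0 + A 0 1 * (1 - 0) = A 0 1 := by ring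
  have h2 : (A 0 0 + A 1 0) * 0 + (A 0 1 + 0) * (1 - 0) = A 0 1 := by ring
  rw [h1, h2, div_self (ne_of_gt hA01)]

lemma phi_contAt {A : Mat} (hA : ColAllowable A) {x : ℝ} (hx : x ∈ Set.Icc (0:ℝ) 1) :
    ContinuousAt (phi A) x := by
  apply ContinuousAt.div
  · fun_prop
  · unfold den; fun_prop
  · exact ne_of_gt (den_pos hA hx)

lemma phi_pow_fix_one {A : Mat} (hA : ColAllowable A) (h10 : A 1 0 = 0) (n : ℕ) :
    phi (A ^ n) 1 = 1 := by
  induction n with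
  | zero => simpa using phi_one_mat
  | succ n ih =>
    rw [phi_pow_succ hA n (by norm_num), ih, phi_fix_one hA h10]

lemma phi_pow_fix_zero {A : Mat} (hA : ColAllowable A) (h01 : A 0 1 = 0) (n : ℕ) :
    phi (A ^ n) 0 = 0 := by
  induction n with
  | zero => simpa using phi_one_mat
  | succ n ih =>
    rw [phi_pow_succ hA n (by norm_num), ih, phi_fix_zero hA h01]



def sw (A : Mat) : Mat := ![![A 1 1, A 1 0], ![A 0 1, A 0 0]]

@[simp] lemma sw00 (A : Mat) : sw A 0 0 = A 1 1 := rfl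
@[simp] lemma sw01 (A : Mat) : sw A 0 1 = A 1 0 := rfl
@[simp] lemma sw10 (A : Mat) : sw A 1 0 = A 0 1 := rfl
@[simp] lemma sw11 (A : Mat) : sw A 1 1 = A 0 0 := rfl

lemma CA_sw {A : Mat} (hA : ColAllowable A) : ColAllowable (sw A) := by
  refine ⟨fun i j => ?_, ?_, ?_⟩
  · fin_cases i <;> fin_cases j <;> simp [hA.1 _ _]
  · simp; linarith [hA.2.2]
  · simp; linarith [hA.2.1]

lemma sw_mul (A B : Mat) : sw (A * B) = sw A * sw B := by
  ext i j
  fin_cases i <;> fin_cases j <;>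
    simp [Matrix.mul_apply, Fin.sum_univ_two] <;> ring

lemma sw_pow (A : Mat) (n : ℕ) : sw (A ^ n) = (sw A) ^ n := by
  induction n with
  | zero =>
    ext i j
    fin_cases i <;> fin_cases j <;> simp [Matrix.one_apply]
  | succ n ih => rw [pow_succ, sw_mul, ih, pow_succ]

lemma phi_sw {A : Mat} (hA : ColAllowable A) {t : ℝ} (ht : t ∈ Set.Icc (0:ℝ) 1) :
    phi A t = 1 - phi (sw A) (1 - t) := by
  have ht' : (1 - t) ∈ Set.Icc (0:ℝ) 1 := ⟨by linarith [ht.2], by linarith [ht.1]⟩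
  have hd : 0 < den A t := den_pos hA ht
  have hd' : 0 < den (sw A) (1 - t) := den_pos (CA_sw hA) ht'
  have hdeq : den (sw A) (1 - t) = den A t := by
    simp [den]; ring
  rw [phi, phi, hdeq, eq_sub_iff_add_eq, ← add_div, den]
  simp only [sw00, sw01, sw10, sw11]
  rw [show A 0 0 * t + A 0 1 * (1 - t) + (A 1 1 * (1 - t) + A 1 0 * (1 - (1 - t)))
      = (A 0 0 + A 1 0) * t + (A 0 1 + A 1 1) * (1 - t) from by ring]
  exact div_self (by rw [den] at hd; exact ne_of_gt hd)

/-- Push to 1: the basic monotone convergence lemma. -/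
lemma P1pure {A : Mat} (hA : ColAllowable A) (h10 : A 1 0 = 0) (hle : A 1 1 ≤ A 0 0)
    (hns : ¬(A 0 1 = 0 ∧ A 1 1 = A 0 0)) {t0 : ℝ} (ht0 : 0 < t0) (ht1 : t0 < 1) :
    Filter.Tendsto (fun m => phi (A ^ m) t0) Filter.atTop (nhds 1) := by
  have htIcc : t0 ∈ Set.Icc (0:ℝ) 1 := ⟨ht0.le, ht1.le⟩
  set x : ℕ → ℝ := fun m => phi (A ^ m) t0 with hxdef
  have hmem : ∀ m, x m ∈ Set.Icc (0:ℝ) 1 := fun m => phi_mem (CA_pow hA m) htIcc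
  have hstep : ∀ t ∈ Set.Icc (0:ℝ) 1, t ≤ phi A t := by
    intro t ht
    have h := phi_sub_self hA h10 ht
    have hd := den_pos hA ht
    have hnum : 0 ≤ (1 - t) * (A 0 1 * (1 - t) + (A 0 0 - A 1 1) * t) := by
      have := hA.1 0 1
      have h1 : 0 ≤ 1 - t := by linarith [ht.2]
      have h2 : 0 ≤ A 0 0 - A 1 1 := by linarith
      have := ht.1
      positivity
    nlinarith [div_nonneg hnum hd.le]
  have hsucc : ∀ m, x (m + 1) = phi A (x m) := fun m => phi_pow_succ hA m htIcc
  have hmono : Monotone x := by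
    apply monotone_nat_of_le_succ
    intro m
    rw [hsucc m]
    exact hstep _ (hmem m)
  have hbdd : BddAbove (Set.range x) := ⟨1, by rintro y ⟨m, rfl⟩; exact (hmem m).2⟩
  have hlim := tendsto_atTop_ciSup hmono hbdd
  set L := ⨆ m, x m with hLdef
  have hL0 : x 0 ≤ L := le_ciSup hbdd 0
  have hx0 : x 0 = t0 := by simp [hxdef, phi_one_mat]
  have hL1 : L ≤ 1 := ciSup_le fun m => (hmem m).2
  have hLmem : L ∈ Set.Icc (0:ℝ) 1 := ⟨by rw [hx0] at hL0; linarith, hL1⟩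
  have hfix : phi A L = L := by
    have h1 : Filter.Tendsto (fun m => x (m + 1)) Filter.atTop (nhds L) :=
      hlim.comp (Filter.tendsto_add_atTop_nat 1)
    have h2 : Filter.Tendsto (fun m => phi A (x m)) Filter.atTop (nhds (phi A L)) :=
      (phi_contAt hA hLmem).tendsto.comp hlim
    have h3 : (fun m => x (m + 1)) = fun m => phi A (x m) := funext hsucc
    rw [h3] at h1
    exact tendsto_nhds_unique h2 h1
  have hLeq : L = 1 := by
    by_contra hL
    have hLlt : L < 1 := lt_of_le_of_ne hL1 hL
    have h := phi_sub_self hA h10 hLmem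
    rw [hfix, sub_self] at h
    have hd := den_pos hA hLmem
    have hnum : (1 - L) * (A 0 1 * (1 - L) + (A 0 0 - A 1 1) * L) = 0 := by
      rcases div_eq_zero_iff.mp h.symm with h' | h'
      · exact h'
      · exact absurd h' (ne_of_gt hd)
    have hLpos : 0 < L := by rw [hx0] at hL0; linarith
    have h1L : 0 < 1 - L := by linarith
    have hz : A 0 1 * (1 - L) + (A 0 0 - A 1 1) * L = 0 := by
      rcases mul_eq_zero.mp hnum with h' | h'
      · linarith
      · exact h'
    have hb : A 0 1 = 0 := by nlinarith [hA.1 0 1]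
    have heq : A 1 1 = A 0 0 := by nlinarith [hA.1 0 1]
    exact hns ⟨hb, heq⟩
  rw [hLeq] at hlim
  exact hlim

/-- Bounded away from 1. -/
lemma P2pure {A : Mat} (hA : ColAllowable A) (h10 : A 1 0 = 0) (hlt : A 0 0 < A 1 1)
    {t0 : ℝ} (ht0 : 0 ≤ t0) (ht1 : t0 < 1) :
    ∃ mb, mb < 1 ∧ ∀ n, phi (A ^ n) t0 ≤ mb := by
  have hA00 : 0 < A 0 0 := by have := hA.2.1; rw [h10] at this; linarith
  set r := A 0 1 / (A 0 1 + (A 1 1 - A 0 0)) with hrdef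
  have hden : 0 < A 0 1 + (A 1 1 - A 0 0) := by have := hA.1 0 1; linarith
  have hr0 : 0 ≤ r := div_nonneg (hA.1 0 1) hden.le
  have hr1 : r < 1 := by
    rw [hrdef, div_lt_one hden]; linarith
  set mb := max t0 r with hmbdef
  have hmb1 : mb < 1 := max_lt ht1 hr1
  have hmb0 : 0 ≤ mb := le_trans ht0 (le_max_left _ _)
  have hmbIcc : mb ∈ Set.Icc (0:ℝ) 1 := ⟨hmb0, hmb1.le⟩
  have hmbfix : phi A mb ≤ mb := by
    have h := phi_sub_self hA h10 hmbIcc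
    have hd := den_pos hA hmbIcc
    have hrle : r ≤ mb := le_max_right _ _
    have hnum : A 0 1 * (1 - mb) + (A 0 0 - A 1 1) * mb ≤ 0 := by
      rw [hrdef, div_le_iff₀ hden] at hrle
      nlinarith
    have h1mb : 0 ≤ 1 - mb := by linarith
    have : (1 - mb) * (A 0 1 * (1 - mb) + (A 0 0 - A 1 1) * mb) ≤ 0 :=
      mul_nonpos_of_nonneg_of_nonpos h1mb hnum
    nlinarith [div_nonpos_of_nonpos_of_nonneg this hd.le]
  refine ⟨mb, hmb1, ?_⟩
  intro n
  induction n with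
  | zero => rw [pow_zero, phi_one_mat]; exact le_max_left t0 r
  | succ n ih =>
    have htIcc : t0 ∈ Set.Icc (0:ℝ) 1 := ⟨ht0, ht1.le⟩
    have hxm : phi (A ^ n) t0 ∈ Set.Icc (0:ℝ) 1 := phi_mem (CA_pow hA n) htIcc
    rw [phi_pow_succ hA n htIcc]
    calc phi A (phi (A ^ n) t0) ≤ phi A mb := by
          apply phi_le_phi hA _ hxm hmbIcc ih
          rw [h10]; nlinarith [hA.1 0 0, hA.1 1 1]
      _ ≤ mb := hmbfix

/-- Push to 0 (mirror of P1pure). -/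
lemma P1pure' {A : Mat} (hA : ColAllowable A) (h01 : A 0 1 = 0) (hle : A 0 0 ≤ A 1 1)
    (hns : ¬(A 1 0 = 0 ∧ A 0 0 = A 1 1)) {t0 : ℝ} (ht0 : 0 < t0) (ht1 : t0 < 1) :
    Filter.Tendsto (fun m => phi (A ^ m) t0) Filter.atTop (nhds 0) := by
  have h := P1pure (CA_sw hA) h01 hle hns (t0 := 1 - t0) (by linarith) (by linarith)
  have heq : ∀ m, phi (A ^ m) t0 = 1 - phi ((sw A) ^ m) (1 - t0) := by
    intro m
    rw [← sw_pow, phi_sw (CA_pow hA m) ⟨ht0.le, ht1.le⟩]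
  simp only [heq]
  have := h.const_sub 1
  simpa using this

/-- Bounded away from 0 (mirror of P2pure). -/
lemma P2pure' {A : Mat} (hA : ColAllowable A) (h01 : A 0 1 = 0) (hlt : A 1 1 < A 0 0)
    {t0 : ℝ} (ht0 : 0 < t0) (ht1 : t0 ≤ 1) :
    ∃ mb, 0 < mb ∧ ∀ n, mb ≤ phi (A ^ n) t0 := by
  obtain ⟨mb', hmb1, hmb⟩ := P2pure (CA_sw hA) h01 hlt
    (t0 := 1 - t0) (by linarith) (by linarith)
  refine ⟨1 - mb', by linarith, fun n => ?_⟩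
  have heq : phi (A ^ n) t0 = 1 - phi ((sw A) ^ n) (1 - t0) := by
    rw [← sw_pow, phi_sw (CA_pow hA n) ⟨ht0.le, ht1⟩]
  rw [heq]
  linarith [hmb n]



structure Ctx (s : ℕ) where
  M : Fin s → Mat
  tau : ℝ
  k0 : Fin s
  ca : ∀ k, ColAllowable (M k)
  ht0 : 0 < tau
  ht1 : tau < 1
  hq : phi (M k0) tau ≠ tau
  star : ∀ ε > 0, ∃ N, ∀ u w : List (Fin s), N ≤ u.length →
    |phi (Pw M u) (phi (Pw M w) tau) - phi (Pw M u) tau| < ε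

lemma Ctx.tauIcc (C : Ctx s) : C.tau ∈ Set.Icc (0:ℝ) 1 := ⟨C.ht0.le, C.ht1.le⟩

lemma template (C : Ctx s) {x : ℝ} (hx : x ∈ Set.Icc (0:ℝ) 1)
    (w : ℕ → List (Fin s))
    (hw : Filter.Tendsto (fun m => phi (Pw C.M (w m)) C.tau) Filter.atTop (nhds x))
    (v : List (Fin s)) (hv : v ≠ []) {c : ℝ} (hc : 0 < c)
    (hsep : ∀ n, c ≤ |phi ((Pw C.M v) ^ n) x - phi ((Pw C.M v) ^ n) C.tau|) : False := by
  obtain ⟨N, hN⟩ := C.star (c/2) (by positivity)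
  have hvlen : 1 ≤ v.length := List.length_pos_iff.mpr hv
  set u := List.flatten (List.replicate N v) with hudef
  have hlen : N ≤ u.length := by
    rw [hudef, length_join_replicate]
    calc N = N * 1 := (mul_one N).symm
      _ ≤ N * v.length := Nat.mul_le_mul_left N hvlen
  have hPu : Pw C.M u = (Pw C.M v) ^ N := Pw_join_replicate N v
  have key : ∀ m, |phi ((Pw C.M v) ^ N) (phi (Pw C.M (w m)) C.tau)
      - phi ((Pw C.M v) ^ N) C.tau| < c/2 := by
    intro m
    have := hN u (w m) hlen
    rwa [hPu] at this
  have hcont : ContinuousAt (phi ((Pw C.M v) ^ N)) x :=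
    phi_contAt (CA_pow (CA_Pw C.ca v) N) hx
  have hlim : Filter.Tendsto
      (fun m => |phi ((Pw C.M v) ^ N) (phi (Pw C.M (w m)) C.tau)
        - phi ((Pw C.M v) ^ N) C.tau|) Filter.atTop
      (nhds (|phi ((Pw C.M v) ^ N) x - phi ((Pw C.M v) ^ N) C.tau|)) := by
    have h1 := hcont.tendsto.comp hw
    exact (h1.sub_const _).abs
  have hle := le_of_tendsto hlim (Filter.Eventually.of_forall fun m => (key m).le)
  have := hsep N
  linarith

lemma Xscalar (C : Ctx s) (v : List (Fin s)) (hv : v ≠ []) {c : ℝ} (hc : 0 < c)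
    (hPv : Pw C.M v = c • 1) : False := by
  have hqIcc : phi (C.M C.k0) C.tau ∈ Set.Icc (0:ℝ) 1 := phi_mem (C.ca _) C.tauIcc
  refine template C hqIcc (fun _ => [C.k0]) ?_ v hv
    (c := |phi (C.M C.k0) C.tau - C.tau|)
    (abs_pos.mpr (sub_ne_zero.mpr C.hq)) ?_
  · simp only [Pw_single]
    exact tendsto_const_nhds
  · intro n
    rw [hPv, smul_pow, one_pow, phi_smul_one (pow_pos hc n), phi_smul_one (pow_pos hc n)]

lemma Lpush1 (C : Ctx s) (u : List (Fin s)) (hu : u ≠ [])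
    (h10 : Pw C.M u 1 0 = 0) (hle : Pw C.M u 1 1 ≤ Pw C.M u 0 0) :
    Filter.Tendsto (fun m => phi ((Pw C.M u) ^ m) C.tau) Filter.atTop (nhds 1) := by
  by_cases hns : Pw C.M u 0 1 = 0 ∧ Pw C.M u 1 1 = Pw C.M u 0 0
  · exfalso
    have hA := CA_Pw C.ca u
    have hA00 : 0 < Pw C.M u 0 0 := by have := hA.2.1; rw [h10] at this; linarith
    have hsc : Pw C.M u = (Pw C.M u 0 0) • 1 := by
      ext i j
      fin_cases i <;> fin_cases j <;>
        simp [Matrix.smul_apply, Matrix.one_apply, h10, hns.1, hns.2]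
    exact Xscalar C u hu hA00 hsc
  · exact P1pure (CA_Pw C.ca u) h10 hle hns C.ht0 C.ht1

lemma Lpush0 (C : Ctx s) (u : List (Fin s)) (hu : u ≠ [])
    (h01 : Pw C.M u 0 1 = 0) (hle : Pw C.M u 0 0 ≤ Pw C.M u 1 1) :
    Filter.Tendsto (fun m => phi ((Pw C.M u) ^ m) C.tau) Filter.atTop (nhds 0) := by
  by_cases hns : Pw C.M u 1 0 = 0 ∧ Pw C.M u 0 0 = Pw C.M u 1 1
  · exfalso
    have hA := CA_Pw C.ca u
    have hA00 : 0 < Pw C.M u 0 0 := by have := hA.2.1; rw [hns.1] at this; linarith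
    have hsc : Pw C.M u = (Pw C.M u 0 0) • 1 := by
      ext i j
      fin_cases i <;> fin_cases j <;>
        simp [Matrix.smul_apply, Matrix.one_apply, h01, hns.1, hns.2.symm]
    exact Xscalar C u hu hA00 hsc
  · exact P1pure' (CA_Pw C.ca u) h01 hle hns C.ht0 C.ht1

lemma X3 (C : Ctx s) (u v : List (Fin s)) (hu : u ≠ []) (hv : v ≠ [])
    (hu10 : Pw C.M u 1 0 = 0) (hule : Pw C.M u 1 1 ≤ Pw C.M u 0 0)
    (hv10 : Pw C.M v 1 0 = 0) (hvlt : Pw C.M v 0 0 < Pw C.M v 1 1) : False := by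
  obtain ⟨mb, hmb1, hmb⟩ := P2pure (CA_Pw C.ca v) hv10 hvlt C.ht0.le C.ht1
  refine template C (x := 1) ⟨zero_le_one, le_refl 1⟩
    (fun m => List.flatten (List.replicate m u)) ?_ v hv (c := 1 - mb) (by linarith) ?_
  · simp only [Pw_join_replicate]
    exact Lpush1 C u hu hu10 hule
  · intro n
    rw [phi_pow_fix_one (CA_Pw C.ca v) hv10 n]
    have h1 := hmb n
    have h2 := (phi_mem (CA_pow (CA_Pw C.ca v) n) C.tauIcc).1
    rw [abs_of_nonneg (by linarith)]
    linarith

lemma X6 (C : Ctx s) (u v : List (Fin s)) (hu : u ≠ []) (hv : v ≠ [])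
    (hu01 : Pw C.M u 0 1 = 0) (hule : Pw C.M u 0 0 ≤ Pw C.M u 1 1)
    (hv01 : Pw C.M v 0 1 = 0) (hvlt : Pw C.M v 1 1 < Pw C.M v 0 0) : False := by
  obtain ⟨mb, hmb0, hmb⟩ := P2pure' (CA_Pw C.ca v) hv01 hvlt C.ht0 C.ht1.le
  refine template C (x := 0) ⟨le_refl 0, zero_le_one⟩
    (fun m => List.flatten (List.replicate m u)) ?_ v hv (c := mb) hmb0 ?_
  · simp only [Pw_join_replicate]
    exact Lpush0 C u hu hu01 hule
  · intro n
    rw [phi_pow_fix_zero (CA_Pw C.ca v) hv01 n, zero_sub, abs_neg,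
      abs_of_nonneg (phi_mem (CA_pow (CA_Pw C.ca v) n) C.tauIcc).1]
    exact hmb n

lemma X7 (C : Ctx s) (u l v : List (Fin s)) (hu : u ≠ []) (hv : v ≠ [])
    (hu10 : Pw C.M u 1 0 = 0) (hule : Pw C.M u 1 1 ≤ Pw C.M u 0 0)
    (hl00 : Pw C.M l 0 0 = 0)
    (hv01 : Pw C.M v 0 1 = 0) (hvlt : Pw C.M v 1 1 < Pw C.M v 0 0) : False := by
  obtain ⟨mb, hmb0, hmb⟩ := P2pure' (CA_Pw C.ca v) hv01 hvlt C.ht0 C.ht1.le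
  refine template C (x := 0) ⟨le_refl 0, zero_le_one⟩
    (fun m => l ++ List.flatten (List.replicate m u)) ?_ v hv (c := mb) hmb0 ?_
  · have h1 : ∀ m, phi (Pw C.M (l ++ List.flatten (List.replicate m u))) C.tau
        = phi (Pw C.M l) (phi ((Pw C.M u) ^ m) C.tau) := by
      intro m
      rw [Pw_append, Pw_join_replicate,
        phi_comp (CA_Pw C.ca l) (CA_pow (CA_Pw C.ca u) m) C.tauIcc]
    simp only [h1]
    have h2 := Lpush1 C u hu hu10 hule
    have h3 := (phi_contAt (CA_Pw C.ca l) ⟨zero_le_one, le_refl 1⟩).tendsto.comp h2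
    rwa [phi_one_to_zero hl00] at h3
  · intro n
    rw [phi_pow_fix_zero (CA_Pw C.ca v) hv01 n, zero_sub, abs_neg,
      abs_of_nonneg (phi_mem (CA_pow (CA_Pw C.ca v) n) C.tauIcc).1]
    exact hmb n

lemma X8 (C : Ctx s) (u l v : List (Fin s)) (hu : u ≠ []) (hv : v ≠ [])
    (hu01 : Pw C.M u 0 1 = 0) (hule : Pw C.M u 0 0 ≤ Pw C.M u 1 1)
    (hl11 : Pw C.M l 1 1 = 0)
    (hv10 : Pw C.M v 1 0 = 0) (hvlt : Pw C.M v 0 0 < Pw C.M v 1 1) : False := by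
  obtain ⟨mb, hmb1, hmb⟩ := P2pure (CA_Pw C.ca v) hv10 hvlt C.ht0.le C.ht1
  refine template C (x := 1) ⟨zero_le_one, le_refl 1⟩
    (fun m => l ++ List.flatten (List.replicate m u)) ?_ v hv (c := 1 - mb) (by linarith) ?_
  · have h1 : ∀ m, phi (Pw C.M (l ++ List.flatten (List.replicate m u))) C.tau
        = phi (Pw C.M l) (phi ((Pw C.M u) ^ m) C.tau) := by
      intro m
      rw [Pw_append, Pw_join_replicate,
        phi_comp (CA_Pw C.ca l) (CA_pow (CA_Pw C.ca u) m) C.tauIcc]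
    simp only [h1]
    have h2 := Lpush0 C u hu hu01 hule
    have h3 := (phi_contAt (CA_Pw C.ca l) ⟨le_refl 0, zero_le_one⟩).tendsto.comp h2
    rwa [phi_zero_to_one (CA_Pw C.ca l) hl11] at h3
  · intro n
    rw [phi_pow_fix_one (CA_Pw C.ca v) hv10 n]
    have h1 := hmb n
    have h2 := (phi_mem (CA_pow (CA_Pw C.ca v) n) C.tauIcc).1
    rw [abs_of_nonneg (by linarith)]
    linarith

lemma X9 (C : Ctx s) (k : Fin s) (h00 : C.M k 0 0 = 0) (h11 : C.M k 1 1 = 0) : False := by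
  set A := C.M k with hAdef
  have hA : ColAllowable A := C.ca k
  have hb : 0 < A 0 1 := by have := hA.2.2; rw [h11] at this; linarith
  have hcp : 0 < A 1 0 := by have := hA.2.1; rw [h00] at this; linarith
  set q := phi (C.M C.k0) C.tau with hqdef
  have hqIcc : q ∈ Set.Icc (0:ℝ) 1 := phi_mem (C.ca _) C.tauIcc
  have hqne : q ≠ C.tau := C.hq
  have hA2 : A * A = (A 0 1 * A 1 0) • 1 := by
    ext i j
    fin_cases i <;> fin_cases j <;>
      simp [Matrix.mul_apply, Fin.sum_univ_two, Matrix.smul_apply, Matrix.one_apply,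
        h00, h11] <;> ring
  have hdelta : 0 < |q - C.tau| := abs_pos.mpr (sub_ne_zero.mpr hqne)
  have hdiff := phi_diff hA C.tauIcc hqIcc
  have hd1 := den_pos hA C.tauIcc
  have hd2 := den_pos hA hqIcc
  have hdelta' : 0 < |phi A q - phi A C.tau| := by
    rw [abs_pos, hdiff, h00, h11]
    apply div_ne_zero
    · apply mul_ne_zero
      · nlinarith
      · exact sub_ne_zero.mpr hqne
    · positivity
  have hpow : ∀ (n : ℕ), (∀ t, t ∈ Set.Icc (0:ℝ) 1 → phi (A ^ n) t = t) ∨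
      (∀ t, t ∈ Set.Icc (0:ℝ) 1 → phi (A ^ n) t = phi A t) := by
    intro n
    rcases Nat.even_or_odd n with ⟨j, hj⟩ | ⟨j, hj⟩
    · left
      intro t ht
      have : A ^ n = (A 0 1 * A 1 0) ^ j • 1 := by
        rw [hj, show j + j = 2 * j from by ring, pow_mul, sq, hA2, smul_pow, one_pow]
      rw [this, phi_smul_one (pow_pos (mul_pos hb hcp) j)]
    · right
      intro t ht
      have hsc : A ^ (2 * j) = (A 0 1 * A 1 0) ^ j • 1 := by
        rw [pow_mul, sq, hA2, smul_pow, one_pow]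
      have : A ^ n = (A 0 1 * A 1 0) ^ j • 1 * A := by rw [hj, pow_succ, hsc]
      rw [this, phi_comp (by
          rw [← hsc]; exact CA_pow hA (2*j)) hA ht,
        phi_smul_one (pow_pos (mul_pos hb hcp) j)]
  refine template C hqIcc (fun _ => [C.k0]) ?_ [k] (by simp)
    (c := min (|q - C.tau|) (|phi A q - phi A C.tau|)) (lt_min hdelta hdelta') ?_
  · simp only [Pw_single]
    exact tendsto_const_nhds
  · intro n
    rw [Pw_single, ← hAdef]
    rcases hpow n with h1 | h1
    · rw [h1 q hqIcc, h1 C.tau C.tauIcc]; exact min_le_left _ _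
    · rw [h1 q hqIcc, h1 C.tau C.tauIcc]; exact min_le_right _ _


lemma hcomp (C : Ctx s) (k l : Fin s) (hdk : C.M k 1 1 = 0) (hal : C.M l 0 0 = 0) :
    Pw C.M [k,l] 1 0 = 0 ∧ Pw C.M [k,l] 0 0 = C.M k 0 1 * C.M l 1 0 ∧
      Pw C.M [k,l] 1 1 = C.M k 1 0 * C.M l 0 1 := by
  rw [Pw_pair]
  refine ⟨?_, ?_, ?_⟩ <;> simp [Matrix.mul_apply, Fin.sum_univ_two, hdk, hal]

lemma Xdiag (C : Ctx s) (k : Fin s) (h10 : C.M k 1 0 = 0) (h01 : C.M k 0 1 = 0)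
    (heq : C.M k 1 1 = C.M k 0 0) : False := by
  have hA := C.ca k
  have h00 : 0 < C.M k 0 0 := by have := hA.2.1; rw [h10] at this; linarith
  apply Xscalar C [k] (by simp) h00
  rw [Pw_single]
  ext i j
  fin_cases i <;> fin_cases j <;>
    simp [Matrix.smul_apply, Matrix.one_apply, h10, h01, heq]

theorem main (C : Ctx s) :
    ((∀ k, C.M k 1 0 = 0 → C.M k 1 1 ≤ C.M k 0 0) ∧
     (∀ k, C.M k 0 1 = 0 → C.M k 0 0 ≤ C.M k 1 1) ∧
     (∀ k l, C.M k 1 1 = 0 → C.M l 0 0 = 0 →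
       C.M l 0 1 * C.M k 1 0 ≤ C.M k 0 1 * C.M l 1 0) ∧
     (∀ k, ¬(C.M k 0 1 = 0 ∧ C.M k 1 0 = 0)) ∧
     (∀ k, ¬(C.M k 0 0 = 0 ∧ C.M k 1 1 = 0))) ∨
    ((∀ k, C.M k 1 0 = 0 → C.M k 0 0 < C.M k 1 1) ∧
     (∀ k, C.M k 0 1 = 0 → C.M k 1 1 < C.M k 0 0) ∧
     (∀ k l, C.M k 1 1 = 0 → C.M l 0 0 = 0 →
       C.M k 0 1 * C.M l 1 0 < C.M l 0 1 * C.M k 1 0)) ∨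
    ((∀ k, C.M k 1 0 = 0 → C.M k 1 1 ≤ C.M k 0 0) ∧
     (∀ k, C.M k 0 1 = 0 → C.M k 1 1 < C.M k 0 0) ∧
     (∀ k, C.M k 0 0 ≠ 0)) ∨
    ((∀ k, C.M k 1 0 = 0 → C.M k 0 0 < C.M k 1 1) ∧
     (∀ k, C.M k 0 1 = 0 → C.M k 0 0 ≤ C.M k 1 1) ∧
     (∀ k, C.M k 1 1 ≠ 0)) := by
  have hAD : ∀ k, ¬(C.M k 0 0 = 0 ∧ C.M k 1 1 = 0) := fun k hk => (X9 C k hk.1 hk.2).elim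
  by_cases hG1 : ∀ k l, C.M k 1 1 = 0 → C.M l 0 0 = 0 →
      C.M l 0 1 * C.M k 1 0 ≤ C.M k 0 1 * C.M l 1 0
  · by_cases hG2 : ∀ k l, C.M k 1 1 = 0 → C.M l 0 0 = 0 →
        C.M k 0 1 * C.M l 1 0 < C.M l 0 1 * C.M k 1 0
    · -- Branch 1 : no Φ×Ψ pairs effectively
      by_cases hEu : ∃ k, C.M k 1 0 = 0 ∧ C.M k 0 0 < C.M k 1 1
      · obtain ⟨k1, hk1c, hk1⟩ := hEu
        have halpha' : ∀ k, C.M k 1 0 = 0 → C.M k 0 0 < C.M k 1 1 := by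
          intro k hk
          by_contra hd
          push_neg at hd
          exact (X3 C [k] [k1] (by simp) (by simp) (by rwa [Pw_single]) (by rwa [Pw_single])
            (by rwa [Pw_single]) (by rwa [Pw_single])).elim
        by_cases hEw : ∃ k, C.M k 0 1 = 0 ∧ C.M k 1 1 < C.M k 0 0
        · obtain ⟨k3, hk3c, hk3⟩ := hEw
          have hbeta' : ∀ k, C.M k 0 1 = 0 → C.M k 1 1 < C.M k 0 0 := by
            intro k hk
            by_contra hd
            push_neg at hd
            exact (X6 C [k] [k3] (by simp) (by simp) (by rwa [Pw_single]) (by rwa [Pw_single])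
              (by rwa [Pw_single]) (by rwa [Pw_single])).elim
          exact Or.inr (Or.inl ⟨halpha', hbeta', hG2⟩)
        · push_neg at hEw
          by_cases hEPhi : ∃ k, C.M k 1 1 = 0
          · by_cases hEwm : ∃ k, C.M k 0 1 = 0
            · exfalso
              obtain ⟨k4, hk4⟩ := hEwm
              obtain ⟨kp, hkp⟩ := hEPhi
              exact X8 C [k4] [kp] [k1] (by simp) (by simp) (by rwa [Pw_single])
                (by rw [Pw_single]; exact hEw k4 hk4) (by rwa [Pw_single])
                (by rwa [Pw_single]) (by rwa [Pw_single])
            · push_neg at hEwm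
              have hbeta' : ∀ k, C.M k 0 1 = 0 → C.M k 1 1 < C.M k 0 0 :=
                fun k hk => absurd hk (hEwm k)
              exact Or.inr (Or.inl ⟨halpha', hbeta', hG2⟩)
          · push_neg at hEPhi
            exact Or.inr (Or.inr (Or.inr ⟨halpha', hEw, hEPhi⟩))
      · push_neg at hEu
        by_cases hEw : ∃ k, C.M k 0 1 = 0 ∧ C.M k 1 1 < C.M k 0 0
        · obtain ⟨k3, hk3c, hk3⟩ := hEw
          have hbeta' : ∀ k, C.M k 0 1 = 0 → C.M k 1 1 < C.M k 0 0 := by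
            intro k hk
            by_contra hd
            push_neg at hd
            exact (X6 C [k] [k3] (by simp) (by simp) (by rwa [Pw_single]) (by rwa [Pw_single])
              (by rwa [Pw_single]) (by rwa [Pw_single])).elim
          by_cases hEPsi : ∃ l, C.M l 0 0 = 0
          · obtain ⟨l0, hl0⟩ := hEPsi
            have halpha' : ∀ k, C.M k 1 0 = 0 → C.M k 0 0 < C.M k 1 1 := by
              intro k hk
              by_contra hd
              push_neg at hd
              exact X7 C [k] [l0] [k3] (by simp) (by simp) (by rwa [Pw_single])
                (by rwa [Pw_single]) (by rwa [Pw_single]) (by rwa [Pw_single])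
                (by rwa [Pw_single])
            exact Or.inr (Or.inl ⟨halpha', hbeta', hG2⟩)
          · push_neg at hEPsi
            exact Or.inr (Or.inr (Or.inl ⟨hEu, hbeta', hEPsi⟩))
        · push_neg at hEw
          have hD : ∀ k, ¬(C.M k 0 1 = 0 ∧ C.M k 1 0 = 0) := by
            intro k hk
            exact Xdiag C k hk.2 hk.1 (le_antisymm (hEu k hk.2) (hEw k hk.1))
          exact Or.inl ⟨hEu, hEw, hG1, hD, hAD⟩
    · -- Branch 2 : G1 and some pair with γ (composite u⁺ word)
      push_neg at hG2
      obtain ⟨k, l, hdk, hal, hkl⟩ := hG2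
      obtain ⟨h10c, h00c, h11c⟩ := hcomp C k l hdk hal
      have hcu : Pw C.M [k,l] 1 1 ≤ Pw C.M [k,l] 0 0 := by
        rw [h00c, h11c]
        calc C.M k 1 0 * C.M l 0 1 = C.M l 0 1 * C.M k 1 0 := mul_comm _ _
          _ ≤ C.M k 0 1 * C.M l 1 0 := hkl
      have halpha : ∀ k', C.M k' 1 0 = 0 → C.M k' 1 1 ≤ C.M k' 0 0 := by
        intro k' hc
        by_contra h'
        push_neg at h'
        exact X3 C [k,l] [k'] (by simp) (by simp) h10c hcu (by rwa [Pw_single])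
          (by rwa [Pw_single])
      have hbeta : ∀ k', C.M k' 0 1 = 0 → C.M k' 0 0 ≤ C.M k' 1 1 := by
        intro k' hc
        by_contra h'
        push_neg at h'
        exact X7 C [k,l] [l] [k'] (by simp) (by simp) h10c hcu (by rwa [Pw_single])
          (by rwa [Pw_single]) (by rwa [Pw_single])
      have hD : ∀ k', ¬(C.M k' 0 1 = 0 ∧ C.M k' 1 0 = 0) := by
        intro k' hk'
        exact Xdiag C k' hk'.2 hk'.1 (le_antisymm (halpha k' hk'.2) (hbeta k' hk'.1))
      exact Or.inl ⟨halpha, hbeta, hG1, hD, hAD⟩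
  · -- ¬G1 : some pair with strict γ' (composite strict u⁻ word)
    push_neg at hG1
    obtain ⟨k, l, hdk, hal, hkl⟩ := hG1
    obtain ⟨h10c, h00c, h11c⟩ := hcomp C k l hdk hal
    have hcv : Pw C.M [k,l] 0 0 < Pw C.M [k,l] 1 1 := by
      rw [h00c, h11c]
      calc C.M k 0 1 * C.M l 1 0 < C.M l 0 1 * C.M k 1 0 := hkl
        _ = C.M k 1 0 * C.M l 0 1 := mul_comm _ _
    by_cases hG2 : ∀ k l, C.M k 1 1 = 0 → C.M l 0 0 = 0 →
        C.M k 0 1 * C.M l 1 0 < C.M l 0 1 * C.M k 1 0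
    · have halpha' : ∀ k', C.M k' 1 0 = 0 → C.M k' 0 0 < C.M k' 1 1 := by
        intro k' hc
        by_contra h'
        push_neg at h'
        exact X3 C [k'] [k,l] (by simp) (by simp) (by rwa [Pw_single]) (by rwa [Pw_single])
          h10c hcv
      have hbeta' : ∀ k', C.M k' 0 1 = 0 → C.M k' 1 1 < C.M k' 0 0 := by
        intro k' hc
        by_contra h'
        push_neg at h'
        exact X8 C [k'] [k] [k,l] (by simp) (by simp) (by rwa [Pw_single])
          (by rwa [Pw_single]) (by rwa [Pw_single]) h10c hcv
      exact Or.inr (Or.inl ⟨halpha', hbeta', hG2⟩)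
    · exfalso
      push_neg at hG2
      obtain ⟨k', l', hdk', hal', hkl'⟩ := hG2
      obtain ⟨h10c', h00c', h11c'⟩ := hcomp C k' l' hdk' hal'
      have hcu : Pw C.M [k',l'] 1 1 ≤ Pw C.M [k',l'] 0 0 := by
        rw [h00c', h11c']
        calc C.M k' 1 0 * C.M l' 0 1 = C.M l' 0 1 * C.M k' 1 0 := mul_comm _ _
          _ ≤ C.M k' 0 1 * C.M l' 1 0 := hkl'
      exact X3 C [k',l'] [k,l] (by simp) (by simp) h10c' hcu h10c hcv



lemma Pprod_eq {M : Fin s → Mat} (ω : ℕ → Fin s) (n : ℕ) :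
    Pprod M ω n = Pw M ((List.range n).map ω) := by
  simp [Pprod, Pw, List.map_map]
  rfl

lemma range_map_eq {α : Type*} (l : List α) (f : ℕ → α)
    (hf : ∀ (i : ℕ) (h : i < l.length), f i = l[i]) :
    (List.range l.length).map f = l := by
  apply List.ext_getElem
  · simp
  · intro i h1 h2
    simp only [List.getElem_map, List.getElem_range]
    exact hf i h2


end Stmt13

theorem stmt13 (s : ℕ) (M : Fin s → Matrix (Fin 2) (Fin 2) ℝ)
    (hM : ∀ k, ColAllowable (M k))
    (V : Fin 2 → ℝ) (hV0 : 0 < V 0) (hV1 : 0 < V 1)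
    (F : (ℕ → Fin s) → (Fin 2 → ℝ))
    (h : TendstoUniformly (fun n ω => Nv ((Pprod M ω n).mulVec V)) F atTop) :
    -- Case 1
    ((∀ k, M k 1 0 = 0 → M k 1 1 ≤ M k 0 0) ∧
     (∀ k, M k 0 1 = 0 → M k 0 0 ≤ M k 1 1) ∧
     (∀ k l, M k 1 1 = 0 → M l 0 0 = 0 →
       M l 0 1 * M k 1 0 ≤ M k 0 1 * M l 1 0) ∧
     (∀ k, ¬(M k 0 1 = 0 ∧ M k 1 0 = 0)) ∧
     (∀ k, ¬(M k 0 0 = 0 ∧ M k 1 1 = 0))) ∨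
    -- Case 2
    ((∀ k, M k 1 0 = 0 → M k 0 0 < M k 1 1) ∧
     (∀ k, M k 0 1 = 0 → M k 1 1 < M k 0 0) ∧
     (∀ k l, M k 1 1 = 0 → M l 0 0 = 0 →
       M k 0 1 * M l 1 0 < M l 0 1 * M k 1 0)) ∨
    -- Case 3
    ((∀ k, M k 1 0 = 0 → M k 1 1 ≤ M k 0 0) ∧
     (∀ k, M k 0 1 = 0 → M k 1 1 < M k 0 0) ∧
     (∀ k, M k 0 0 ≠ 0)) ∨
    -- Case 4
    ((∀ k, M k 1 0 = 0 → M k 0 0 < M k 1 1) ∧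
     (∀ k, M k 0 1 = 0 → M k 0 0 ≤ M k 1 1) ∧
     (∀ k, M k 1 1 ≠ 0)) ∨
    -- Case 5
    (∀ k, ∃ ρ : ℝ, (M k).mulVec V = ρ • V) := by
  classical
  by_cases hC5 : ∀ k, ∃ ρ : ℝ, (M k).mulVec V = ρ • V
  · exact Or.inr (Or.inr (Or.inr (Or.inr hC5)))
  push_neg at hC5
  obtain ⟨k0, hk0⟩ := hC5
  have hS : 0 < V 0 + V 1 := by linarith
  set τ : ℝ := V 0 / (V 0 + V 1) with hτ
  have hNV : Stmt13.NVec V := ⟨hV0.le, hV1.le, hS⟩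
  have ht0 : 0 < τ := div_pos hV0 hS
  have ht1 : τ < 1 := by rw [hτ, div_lt_one hS]; linarith
  have hnvV : nv V = τ := rfl
  have hq : Stmt13.phi (M k0) τ ≠ τ := by
    intro heq
    have h1 : nv ((M k0).mulVec V) = nv V := by
      rw [Stmt13.nv_eq_phi (hM k0) hNV, hnvV, heq]
    set Y := (M k0).mulVec V with hY
    have hNY : Stmt13.NVec Y := Stmt13.NVec_mulVec (hM k0) hNV
    have hSY : 0 < Y 0 + Y 1 := hNY.2.2
    have h2 : Y 0 * (V 0 + V 1) = V 0 * (Y 0 + Y 1) := by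
      rw [nv, nv] at h1
      exact (div_eq_div_iff (ne_of_gt hSY) (ne_of_gt hS)).mp h1
    apply hk0 ((Y 0 + Y 1) / (V 0 + V 1))
    have hsmul : ∀ i, (((Y 0 + Y 1) / (V 0 + V 1)) • V) i
        = (Y 0 + Y 1) / (V 0 + V 1) * V i := fun i => rfl
    have goal0 : Y 0 = (((Y 0 + Y 1) / (V 0 + V 1)) • V) 0 := by
      rw [hsmul, div_mul_eq_mul_div, eq_comm, div_eq_iff (ne_of_gt hS)]
      linear_combination -h2
    have goal1 : Y 1 = (((Y 0 + Y 1) / (V 0 + V 1)) • V) 1 := by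
      rw [hsmul, div_mul_eq_mul_div, eq_comm, div_eq_iff (ne_of_gt hS)]
      linear_combination h2
    funext i
    fin_cases i
    · exact goal0
    · exact goal1
  have hstar : ∀ ε > 0, ∃ N, ∀ u w : List (Fin s), N ≤ u.length →
      |Stmt13.phi (Stmt13.Pw M u) (Stmt13.phi (Stmt13.Pw M w) τ)
        - Stmt13.phi (Stmt13.Pw M u) τ| < ε := by
    intro ε hε
    rw [Metric.tendstoUniformly_iff] at h
    obtain ⟨N, hN⟩ := Filter.eventually_atTop.mp (h (ε/2) (by positivity))
    refine ⟨N, fun u w hlen => ?_⟩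
    set ω : ℕ → Fin s := fun i => if hi : i < (u ++ w).length then (u ++ w)[i] else k0
      with hω
    have hmap1 : (List.range u.length).map ω = u := by
      apply Stmt13.range_map_eq
      intro i hi
      have hi' : i < (u ++ w).length := by
        rw [List.length_append]; omega
      rw [hω]
      simp only [dif_pos hi']
      exact List.getElem_append_left hi
    have hmap2 : (List.range (u ++ w).length).map ω = u ++ w := by
      apply Stmt13.range_map_eq
      intro i hi
      rw [hω]
      simp only [dif_pos hi]
    have hP1 : Pprod M ω u.length = Stmt13.Pw M u := by
      rw [Stmt13.Pprod_eq, hmap1]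
    have hP2 : Pprod M ω (u ++ w).length = Stmt13.Pw M (u ++ w) := by
      rw [Stmt13.Pprod_eq, hmap2]
    have e1 : nv ((Stmt13.Pw M u).mulVec V) = Stmt13.phi (Stmt13.Pw M u) τ := by
      rw [Stmt13.nv_eq_phi (Stmt13.CA_Pw hM u) hNV, hnvV]
    have e2 : nv ((Stmt13.Pw M (u ++ w)).mulVec V)
        = Stmt13.phi (Stmt13.Pw M u) (Stmt13.phi (Stmt13.Pw M w) τ) := by
      rw [Stmt13.Pw_append, ← Matrix.mulVec_mulVec,
        Stmt13.nv_eq_phi (Stmt13.CA_Pw hM u) (Stmt13.NVec_mulVec (Stmt13.CA_Pw hM w) hNV),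
        Stmt13.nv_eq_phi (Stmt13.CA_Pw hM w) hNV, hnvV]
    have d1 := hN u.length hlen ω
    have d2 := hN (u ++ w).length (le_trans hlen (by rw [List.length_append]; omega)) ω
    rw [hP1] at d1
    rw [hP2] at d2
    have hcomp0 : ∀ X : Fin 2 → ℝ, Nv X 0 = nv X := fun X => rfl
    have step1 : |Stmt13.phi (Stmt13.Pw M u) (Stmt13.phi (Stmt13.Pw M w) τ)
        - Stmt13.phi (Stmt13.Pw M u) τ|
        = dist (Nv ((Stmt13.Pw M (u ++ w)).mulVec V) 0) (Nv ((Stmt13.Pw M u).mulVec V) 0) := by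
      rw [Real.dist_eq, hcomp0, hcomp0, e1, e2]
    have step2 : dist (Nv ((Stmt13.Pw M (u ++ w)).mulVec V) 0)
        (Nv ((Stmt13.Pw M u).mulVec V) 0)
        ≤ dist (Nv ((Stmt13.Pw M (u ++ w)).mulVec V)) (Nv ((Stmt13.Pw M u).mulVec V)) :=
      dist_le_pi_dist _ _ 0
    have step3 : dist (Nv ((Stmt13.Pw M (u ++ w)).mulVec V)) (Nv ((Stmt13.Pw M u).mulVec V))
        ≤ dist (F ω) (Nv ((Stmt13.Pw M (u ++ w)).mulVec V))
          + dist (F ω) (Nv ((Stmt13.Pw M u).mulVec V)) := dist_triangle_left _ _ _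
    rw [step1]
    calc dist (Nv ((Stmt13.Pw M (u ++ w)).mulVec V) 0) (Nv ((Stmt13.Pw M u).mulVec V) 0)
        ≤ _ := step2
      _ ≤ _ := step3
      _ < ε/2 + ε/2 := add_lt_add d2 d1
      _ = ε := by ring
  let C : Stmt13.Ctx s := ⟨M, τ, k0, hM, ht0, ht1, hq, hstar⟩
  rcases Stmt13.main C with h1 | h1 | h1 | h1
  · exact Or.inl h1
  · exact Or.inr (Or.inl h1)
  · exact Or.inr (Or.inr (Or.inl h1))
  · exact Or.inr (Or.inr (Or.inr (Or.inl h1)))
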